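/- (Interpolation Lemma) Let A be a finite subset of EuclideanSpace ℝ (Fin d) and u : EuclideanSpace ℝ (Fin d) → EuclideanSpace ℝ (Fin d) a map satisfying ⟪u x − u y, x − y⟫ ≥ 0 for all x, y ∈ A. Then for every κ > 0 there exist a constant L ≥ 0 and a map ũ : EuclideanSpace ℝ (Fin d) → EuclideanSpace ℝ (Fin d) that is Lipschitz with constant L, agrees with u on A, and satisfies ⟪ũ x − ũ y, x − y⟫ ≥ −κ * ‖x − y‖² for all x, y ∈ EuclideanSpace ℝ (Fin d). -/

import Mathlib

open scoped InnerProductSpace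

section KirszbraunAux

open Finset

variable {E : Type*} [NormedAddCommGroup E] [InnerProductSpace ℝ E]

/-- expansion of a weighted sum of squared distances -/
lemma wsum_norm_sq {ι : Type*} [Fintype ι] (μ : ι → ℝ) (hμ : ∑ i, μ i = 1)
    (X : ι → E) (q : E) :
    ∑ i, μ i * ‖q - X i‖ ^ 2
      = ‖q‖ ^ 2 - 2 * ⟪q, ∑ i, μ i • X i⟫_ℝ + ∑ i, μ i * ‖X i‖ ^ 2 := by
  have h1 : ∀ i, μ i * ‖q - X i‖ ^ 2
      = μ i * ‖q‖ ^ 2 - 2 * ⟪q, μ i • X i⟫_ℝ + μ i * ‖X i‖ ^ 2 := by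
    intro i
    rw [norm_sub_sq_real, real_inner_smul_right]
    ring
  rw [Finset.sum_congr rfl (fun i _ => h1 i)]
  rw [Finset.sum_add_distrib, Finset.sum_sub_distrib, ← Finset.sum_mul,
    ← Finset.mul_sum, ← inner_sum, hμ]
  ring

/-- the variance identity -/
lemma wsum_norm_sq_eq_var {ι : Type*} [Fintype ι] (μ : ι → ℝ) (hμ : ∑ i, μ i = 1)
    (X : ι → E) (q : E) :
    ∑ i, μ i * ‖q - X i‖ ^ 2
      = ‖q - ∑ i, μ i • X i‖ ^ 2 + ∑ i, μ i * ‖(∑ j, μ j • X j) - X i‖ ^ 2 := by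
  set xb := ∑ i, μ i • X i with hxb
  have e1 := wsum_norm_sq μ hμ X q
  have e2 := wsum_norm_sq μ hμ X xb
  have e3 : ‖q - xb‖ ^ 2 = ‖q‖ ^ 2 - 2 * ⟪q, xb⟫_ℝ + ‖xb‖ ^ 2 := norm_sub_sq_real q xb
  have e4 : ⟪xb, xb⟫_ℝ = ‖xb‖ ^ 2 := real_inner_self_eq_norm_sq xb
  rw [e1, e2, e3, e4]; ring

/-- double-sum identity for variance -/
lemma var_eq_half_double_sum {ι : Type*} [Fintype ι] (μ : ι → ℝ) (hμ : ∑ i, μ i = 1)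
    (X : ι → E) :
    2 * ∑ i, μ i * ‖(∑ j, μ j • X j) - X i‖ ^ 2
      = ∑ j, μ j * ∑ i, μ i * ‖X j - X i‖ ^ 2 := by
  set xb := ∑ j, μ j • X j with hxb
  have h1 : ∀ j, ∑ i, μ i * ‖X j - X i‖ ^ 2
      = ‖X j - xb‖ ^ 2 + ∑ i, μ i * ‖xb - X i‖ ^ 2 := fun j =>
    wsum_norm_sq_eq_var μ hμ X (X j)
  calc 2 * ∑ i, μ i * ‖xb - X i‖ ^ 2
      = (∑ j, μ j * ‖X j - xb‖ ^ 2) + (∑ j, μ j) * ∑ i, μ i * ‖xb - X i‖ ^ 2 := by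
        rw [hμ]
        have : ∀ j, μ j * ‖X j - xb‖ ^ 2 = μ j * ‖xb - X j‖ ^ 2 := by
          intro j; rw [norm_sub_rev]
        rw [Finset.sum_congr rfl (fun j _ => this j)]
        ring
    _ = ∑ j, (μ j * ‖X j - xb‖ ^ 2 + μ j * ∑ i, μ i * ‖xb - X i‖ ^ 2) := by
        rw [Finset.sum_add_distrib, Finset.sum_mul]
    _ = ∑ j, μ j * ∑ i, μ i * ‖X j - X i‖ ^ 2 := by
        refine Finset.sum_congr rfl (fun j _ => ?_)
        rw [h1 j]; ring

/-- **One-point Kirszbraun lemma** -/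
lemma kirszbraun_one_point {ι : Type*} [Fintype ι] (c : ℝ) (hc : 0 ≤ c)
    (P Q : ι → E) (h : ∀ i j, ‖Q i - Q j‖ ≤ c * ‖P i - P j‖) (p : E) :
    ∃ q : E, ∀ i, ‖q - Q i‖ ≤ c * ‖p - P i‖ := by
  classical
  rcases isEmpty_or_nonempty ι with hι | hι
  · exact ⟨0, fun i => (IsEmpty.false i).elim⟩
  -- the function to maximize on the simplex
  set R : ι → ℝ := fun i => c ^ 2 * ‖p - P i‖ ^ 2 with hR
  set bar : (ι → ℝ) → E := fun μ => ∑ i, μ i • Q i with hbar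
  set φ : (ι → ℝ) → ℝ := fun μ => ∑ i, μ i * (‖bar μ - Q i‖ ^ 2 - R i) with hφ
  -- φ ≤ 0 on the simplex
  have hφle : ∀ μ ∈ stdSimplex ℝ ι, φ μ ≤ 0 := by
    intro μ hμ
    obtain ⟨hμ0, hμ1⟩ := hμ
    have hsplit : φ μ = (∑ i, μ i * ‖bar μ - Q i‖ ^ 2) - ∑ i, μ i * R i := by
      simp only [hφ, mul_sub, Finset.sum_sub_distrib]
    -- variance of Q ≤ c² variance of P ≤ c² * Σ μ ‖p - P i‖²
    have hVQ : 2 * ∑ i, μ i * ‖bar μ - Q i‖ ^ 2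
        = ∑ j, μ j * ∑ i, μ i * ‖Q j - Q i‖ ^ 2 := var_eq_half_double_sum μ hμ1 Q
    have hVP : 2 * ∑ i, μ i * ‖(∑ j, μ j • P j) - P i‖ ^ 2
        = ∑ j, μ j * ∑ i, μ i * ‖P j - P i‖ ^ 2 := var_eq_half_double_sum μ hμ1 P
    have hcomp : ∑ j, μ j * ∑ i, μ i * ‖Q j - Q i‖ ^ 2
        ≤ ∑ j, μ j * ∑ i, μ i * (c ^ 2 * ‖P j - P i‖ ^ 2) := by
      refine Finset.sum_le_sum (fun j _ => ?_)
      refine mul_le_mul_of_nonneg_left ?_ (hμ0 j)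
      refine Finset.sum_le_sum (fun i _ => ?_)
      refine mul_le_mul_of_nonneg_left ?_ (hμ0 i)
      calc ‖Q j - Q i‖ ^ 2 ≤ (c * ‖P j - P i‖) ^ 2 := by
            refine pow_le_pow_left₀ (norm_nonneg _) (h j i) 2
        _ = c ^ 2 * ‖P j - P i‖ ^ 2 := by ring
    have hvarp : ∑ i, μ i * ‖(∑ j, μ j • P j) - P i‖ ^ 2 ≤ ∑ i, μ i * ‖p - P i‖ ^ 2 := by
      have := wsum_norm_sq_eq_var μ hμ1 P p
      nlinarith [sq_nonneg ‖p - ∑ i, μ i • P i‖]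
    have hfact : ∑ j, μ j * ∑ i, μ i * (c ^ 2 * ‖P j - P i‖ ^ 2)
        = c ^ 2 * ∑ j, μ j * ∑ i, μ i * ‖P j - P i‖ ^ 2 := by
      simp only [Finset.mul_sum]
      exact Finset.sum_congr rfl fun j _ => Finset.sum_congr rfl fun i _ => by ring
    have hsumR : ∑ i, μ i * R i = c ^ 2 * ∑ i, μ i * ‖p - P i‖ ^ 2 := by
      rw [Finset.mul_sum]
      refine Finset.sum_congr rfl (fun i _ => ?_)
      simp only [hR]; ring
    rw [hsplit, hsumR]
    nlinarith [sq_nonneg c]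
  -- maximize φ on the simplex
  have hcont : ContinuousOn φ (stdSimplex ℝ ι) := by
    refine Continuous.continuousOn ?_
    refine continuous_finset_sum _ (fun i _ => ?_)
    refine Continuous.mul (continuous_apply i) ?_
    refine Continuous.sub ?_ continuous_const
    have hbarc : Continuous bar := by
      refine continuous_finset_sum _ (fun j _ => ?_)
      exact (continuous_apply j).smul continuous_const
    exact (continuous_norm.comp (hbarc.sub continuous_const)).pow 2
  obtain ⟨μs, hμs, hmax⟩ := (isCompact_stdSimplex ℝ ι).exists_isMaxOn
    ⟨_, ite_eq_mem_stdSimplex ℝ (Classical.arbitrary ι)⟩ hcont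
  refine ⟨bar μs, fun i => ?_⟩
  -- the key perturbation inequality
  have key : ∀ t : ℝ, 0 < t → t ≤ 1 →
      (1 - t) ^ 2 * ‖bar μs - Q i‖ ^ 2 ≤ R i := by
    intro t ht0 ht1
    set ei : ι → ℝ := fun j => if i = j then 1 else 0 with hei
    have hei_mem : ei ∈ stdSimplex ℝ ι := ite_eq_mem_stdSimplex ℝ i
    set μt : ι → ℝ := fun j => (1 - t) * μs j + t * ei j with hμt
    have hμt_mem : μt ∈ stdSimplex ℝ ι := by
      have hrepr : μt = (1 - t) • μs + t • ei := by
        funext j; simp [hμt, smul_eq_mul]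
      rw [hrepr]
      exact (convex_stdSimplex ℝ ι) hμs hei_mem (by linarith) (le_of_lt ht0) (by ring)
    have hbart : bar μt = (1 - t) • bar μs + t • Q i := by
      have h2 : ∑ x, (t * ei x) • Q x = t • Q i := by
        simp only [hei, mul_ite, mul_one, mul_zero, ite_smul, zero_smul]
        simp
      calc bar μt = ∑ x, ((1 - t) • (μs x • Q x) + (t * ei x) • Q x) := by
            refine Finset.sum_congr rfl (fun x _ => ?_)
            simp only [hμt, add_smul, smul_smul]
        _ = (∑ x, (1 - t) • (μs x • Q x)) + ∑ x, (t * ei x) • Q x :=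
            Finset.sum_add_distrib
        _ = (1 - t) • bar μs + t • Q i := by rw [← Finset.smul_sum, h2]
    -- linearity of h in μ, evaluated at bar μt
    have hsum1 : ∑ j, μs j = 1 := hμs.2
    have hsumt : ∑ j, μt j = 1 := hμt_mem.2
    -- h(μs, q) = ‖q - bar μs‖² + φ μs for all q
    have hshift : ∀ q : E, ∑ j, μs j * (‖q - Q j‖ ^ 2 - R j)
        = ‖q - bar μs‖ ^ 2 + φ μs := by
      intro q
      have h1 := wsum_norm_sq_eq_var μs hsum1 Q q
      simp only [hφ, mul_sub, Finset.sum_sub_distrib]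
      rw [h1]; ring
    have hlin : φ μt = (1 - t) * (∑ j, μs j * (‖bar μt - Q j‖ ^ 2 - R j))
        + t * (‖bar μt - Q i‖ ^ 2 - R i) := by
      have h3 : ∑ j, ei j * (‖bar μt - Q j‖ ^ 2 - R j) = ‖bar μt - Q i‖ ^ 2 - R i := by
        simp only [hei, ite_mul, one_mul, zero_mul]
        simp
      calc φ μt = ∑ j, ((1 - t) * (μs j * (‖bar μt - Q j‖ ^ 2 - R j))
            + t * (ei j * (‖bar μt - Q j‖ ^ 2 - R j))) := by
            refine Finset.sum_congr rfl (fun j _ => ?_)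
            simp only [hμt]; ring
        _ = (∑ j, (1 - t) * (μs j * (‖bar μt - Q j‖ ^ 2 - R j)))
            + ∑ j, t * (ei j * (‖bar μt - Q j‖ ^ 2 - R j)) := Finset.sum_add_distrib
        _ = (1 - t) * (∑ j, μs j * (‖bar μt - Q j‖ ^ 2 - R j))
            + t * (‖bar μt - Q i‖ ^ 2 - R i) := by
            rw [← Finset.mul_sum, ← Finset.mul_sum, h3]
    have hballs : ‖bar μt - Q i‖ ^ 2 = (1 - t) ^ 2 * ‖bar μs - Q i‖ ^ 2 := by
      rw [hbart]
      have : (1 - t) • bar μs + t • Q i - Q i = (1 - t) • (bar μs - Q i) := by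
        rw [smul_sub]; module
      rw [this, norm_smul]
      rw [Real.norm_eq_abs, abs_of_nonneg (by linarith)]
      ring
    have hmax' : φ μt ≤ φ μs := hmax hμt_mem
    have hs := hshift (bar μt)
    have hq : 0 ≤ ‖bar μt - bar μs‖ ^ 2 := sq_nonneg _
    have hφs0 : φ μs ≤ 0 := hφle μs hμs
    rw [hlin, hs, hballs] at hmax'
    nlinarith [mul_nonneg (by linarith : (0:ℝ) ≤ 1 - t) hq]
  -- pass to the limit t → 0
  have hsq : ‖bar μs - Q i‖ ^ 2 ≤ R i := by
    refine le_of_forall_pos_le_add (fun ε hε => ?_)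
    set N := ‖bar μs - Q i‖ ^ 2 with hN
    have hN0 : 0 ≤ N := sq_nonneg _
    set t : ℝ := min 1 (ε / (2 * N + 1)) with ht
    have ht0 : 0 < t := lt_min one_pos (div_pos hε (by linarith))
    have ht1 : t ≤ 1 := min_le_left _ _
    have hk := key t ht0 ht1
    have htb : t * (2 * N + 1) ≤ ε := by
      have : t ≤ ε / (2 * N + 1) := min_le_right _ _
      calc t * (2 * N + 1) ≤ (ε / (2 * N + 1)) * (2 * N + 1) := by
            refine mul_le_mul_of_nonneg_right this (by linarith)
        _ = ε := by field_simp
    nlinarith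
  have hrhs : R i = (c * ‖p - P i‖) ^ 2 := by simp only [hR]; ring
  rw [hrhs] at hsq
  exact (pow_le_pow_iff_left₀ (norm_nonneg _)
    (mul_nonneg hc (norm_nonneg _)) two_ne_zero).1 hsq

/-- Kirszbraun for a finite family of constraints, Finset version. -/
lemma kirszbraun_finset_pairs {E : Type*} [NormedAddCommGroup E] [InnerProductSpace ℝ E]
    (c : ℝ) (hc : 0 ≤ c) (T : Finset (E × E))
    (hT : ∀ m ∈ T, ∀ m' ∈ T, ‖m.2 - m'.2‖ ≤ c * ‖m.1 - m'.1‖) (p : E) :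
    ∃ q : E, ∀ m ∈ T, ‖q - m.2‖ ≤ c * ‖p - m.1‖ := by
  classical
  obtain ⟨q, hq⟩ := kirszbraun_one_point (ι := ↥T) c hc
    (fun m => (m : E × E).1) (fun m => (m : E × E).2)
    (fun i j => hT i i.2 j j.2) p
  exact ⟨q, fun m hm => hq ⟨m, hm⟩⟩

/-- Global Kirszbraun extension from a finite set. -/
lemma kirszbraun_extension {E : Type*} [NormedAddCommGroup E] [InnerProductSpace ℝ E]
    [FiniteDimensional ℝ E]
    (c : ℝ) (hc : 0 ≤ c) (s : Finset E) (f : E → E)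
    (hf : ∀ x ∈ s, ∀ y ∈ s, ‖f x - f y‖ ≤ c * ‖x - y‖) :
    ∃ g : E → E, (∀ x ∈ s, g x = f x) ∧ ∀ x y : E, ‖g x - g y‖ ≤ c * ‖x - y‖ := by
  classical
  rcases s.eq_empty_or_nonempty with rfl | ⟨x₀, hx₀⟩
  · refine ⟨fun _ => 0, by simp, fun x y => by
      simpa using mul_nonneg hc (norm_nonneg (x - y))⟩
  set Good : Set (E × E) → Prop := fun S =>
    ((fun x => (x, f x)) '' ↑s ⊆ S) ∧
    ∀ m ∈ S, ∀ m' ∈ S, ‖m.2 - m'.2‖ ≤ c * ‖m.1 - m'.1‖ with hGood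
  have hG0 : Good ((fun x => (x, f x)) '' ↑s) := by
    constructor
    · exact subset_rfl
    · rintro m ⟨x, hx, rfl⟩ m' ⟨y, hy, rfl⟩
      exact hf x hx y hy
  obtain ⟨M, hM0, hMmax⟩ := zorn_subset_nonempty {S | Good S}
    (fun C hC hchain hne => by
      refine ⟨⋃₀ C, ⟨?_, ?_⟩, fun S hS => Set.subset_sUnion_of_mem hS⟩
      · obtain ⟨S, hS⟩ := hne
        exact (hC hS).1.trans (Set.subset_sUnion_of_mem hS)
      · rintro m ⟨S, hS, hmS⟩ m' ⟨S', hS', hmS'⟩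
        rcases hchain.total hS hS' with h | h
        · exact (hC hS').2 m (h hmS) m' hmS'
        · exact (hC hS).2 m hmS m' (h hmS'))
    _ hG0
  have hMgood : Good M := hMmax.1
  have hMne : M.Nonempty := ⟨(x₀, f x₀), hMgood.1 ⟨x₀, hx₀, rfl⟩⟩
  -- totality of M
  have htot : ∀ p : E, ∃ y : E, (p, y) ∈ M := by
    intro p
    by_contra hno
    push_neg at hno
    -- find q in the intersection of all closed balls
    obtain ⟨m₀, hm₀⟩ := hMne
    set Z : ↥M → Set E := fun m => Metric.closedBall (m : E × E).2 (c * ‖p - (m : E × E).1‖)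
      with hZ
    have hclosed : ∀ m, IsClosed (Z m) := fun m => Metric.isClosed_closedBall
    have hKcompact : IsCompact (Z ⟨m₀, hm₀⟩) := isCompact_closedBall _ _
    have hnonempty : (Z ⟨m₀, hm₀⟩ ∩ ⋂ m, Z m).Nonempty := by
      by_contra hemp
      rw [Set.not_nonempty_iff_eq_empty] at hemp
      obtain ⟨t, ht⟩ := hKcompact.elim_finite_subfamily_closed Z hclosed hemp
      -- apply the finite lemma indexed by the finset (insert m₀ t) of ↥M
      set t' : Finset ↥M := insert ⟨m₀, hm₀⟩ t with ht'
      obtain ⟨q, hq⟩ := kirszbraun_one_point (ι := ↥t') c hc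
        (fun i => ((i : ↥M) : E × E).1) (fun i => ((i : ↥M) : E × E).2)
        (fun i j => hMgood.2 _ (i : ↥M).2 _ (j : ↥M).2) p
      have hq' : ∀ m : ↥M, m ∈ t' → q ∈ Z m := by
        intro m hm
        rw [hZ, Metric.mem_closedBall, dist_eq_norm]
        exact hq ⟨m, hm⟩
      have hqK : q ∈ Z ⟨m₀, hm₀⟩ := hq' _ (Finset.mem_insert_self _ _)
      have hqI : q ∈ ⋂ m ∈ t, Z m :=
        Set.mem_iInter₂.2 (fun m hm => hq' m (Finset.mem_insert_of_mem hm))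
      have : q ∈ Z ⟨m₀, hm₀⟩ ∩ ⋂ m ∈ t, Z m := ⟨hqK, hqI⟩
      rw [ht] at this
      exact this
    obtain ⟨q, _, hqI⟩ := hnonempty
    have hq : ∀ m ∈ M, ‖q - m.2‖ ≤ c * ‖p - m.1‖ := by
      intro m hm
      have := Set.mem_iInter.1 hqI ⟨m, hm⟩
      rwa [Metric.mem_closedBall, dist_eq_norm] at this
    -- M ∪ {(p,q)} is Good and strictly bigger
    have hGood' : Good (insert (p, q) M) := by
      constructor
      · exact hMgood.1.trans (Set.subset_insert _ _)
      · rintro m (rfl | hm) m' (rfl | hm')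
        · simp [mul_nonneg hc (norm_nonneg _)]
        · exact hq m' hm'
        · rw [norm_sub_rev, norm_sub_rev (m.1) p]
          exact hq m hm
        · exact hMgood.2 m hm m' hm'
    have := hMmax.2 hGood' (Set.subset_insert _ _)
    exact hno q (this (Set.mem_insert _ _))
  choose g hg using htot
  refine ⟨g, fun x hx => ?_, fun x y => ?_⟩
  · have h1 : (x, g x) ∈ M := hg x
    have h2 : (x, f x) ∈ M := hMgood.1 ⟨x, hx, rfl⟩
    have := hMgood.2 (x, g x) h1 (x, f x) h2
    simpa [sub_eq_zero] using this
  · exact hMgood.2 (x, g x) (hg x) (y, g y) (hg y)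

end KirszbraunAux


/-- any map on a finite set admits a Lipschitz bound there -/
lemma exists_finset_lipschitz_bound {E : Type*} [NormedAddCommGroup E]
    (A : Finset E) (u : E → E) :
    ∃ M : ℝ, 0 ≤ M ∧ ∀ a ∈ A, ∀ b ∈ A, ‖u a - u b‖ ≤ M * ‖a - b‖ := by
  classical
  refine ⟨∑ a ∈ A, ∑ b ∈ A, ‖u a - u b‖ / ‖a - b‖,
    Finset.sum_nonneg fun a _ => Finset.sum_nonneg fun b _ =>
      div_nonneg (norm_nonneg _) (norm_nonneg _), ?_⟩
  intro a ha b hb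
  rcases eq_or_ne a b with rfl | hab
  · simp
  · have hterm : ‖u a - u b‖ / ‖a - b‖ ≤ ∑ a ∈ A, ∑ b ∈ A, ‖u a - u b‖ / ‖a - b‖ := by
      have h1 : ‖u a - u b‖ / ‖a - b‖ ≤ ∑ y ∈ A, ‖u a - u y‖ / ‖a - y‖ :=
        Finset.single_le_sum (f := fun y => ‖u a - u y‖ / ‖a - y‖)
          (fun y _ => div_nonneg (norm_nonneg _) (norm_nonneg _)) hb
      have h2 : ∑ y ∈ A, ‖u a - u y‖ / ‖a - y‖
          ≤ ∑ x ∈ A, ∑ y ∈ A, ‖u x - u y‖ / ‖x - y‖ :=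
        Finset.single_le_sum (f := fun x => ∑ y ∈ A, ‖u x - u y‖ / ‖x - y‖)
          (fun x _ => Finset.sum_nonneg fun y _ =>
            div_nonneg (norm_nonneg _) (norm_nonneg _)) ha
      exact h1.trans h2
    have hpos : 0 < ‖a - b‖ := by
      rw [norm_pos_iff, sub_ne_zero]; exact hab
    calc ‖u a - u b‖ = (‖u a - u b‖ / ‖a - b‖) * ‖a - b‖ := by field_simp
      _ ≤ _ * ‖a - b‖ := mul_le_mul_of_nonneg_right hterm hpos.le



set_option maxHeartbeats 2000000 in
/-- **Interpolation Lemma**: a map that is monotone on a finite set `A` admits,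
for every `κ > 0`, a Lipschitz extension to the whole space that is
`κ`-almost monotone. -/
theorem interpolation_lemma (d : ℕ) (A : Finset (EuclideanSpace ℝ (Fin d)))
    (u : EuclideanSpace ℝ (Fin d) → EuclideanSpace ℝ (Fin d))
    (hmono : ∀ x ∈ A, ∀ y ∈ A, ⟪u x - u y, x - y⟫_ℝ ≥ 0)
    (κ : ℝ) (hκ : 0 < κ) :
    ∃ (L : ℝ), 0 ≤ L ∧
      ∃ ut : EuclideanSpace ℝ (Fin d) → EuclideanSpace ℝ (Fin d),
        LipschitzWith (Real.toNNReal L) ut ∧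
        (∀ x ∈ A, ut x = u x) ∧
        (∀ x y : EuclideanSpace ℝ (Fin d),
          ⟪ut x - ut y, x - y⟫_ℝ ≥ -κ * ‖x - y‖ ^ 2) := by
  classical
  rcases A.eq_empty_or_nonempty with rfl | hAne
  · refine ⟨0, le_refl 0, fun _ => 0, ?_, by simp, fun x y => ?_⟩
    · simpa using LipschitzWith.const (0 : EuclideanSpace ℝ (Fin d))
    · simp only [sub_self, inner_zero_left, ge_iff_le]
      have : 0 ≤ κ * ‖x - y‖ ^ 2 := mul_nonneg hκ.le (sq_nonneg _)
      linarith
  -- a Lipschitz bound for u on A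
  obtain ⟨M, hM0, hMlip⟩ := exists_finset_lipschitz_bound A u
  -- the strongly monotone modification
  set v : EuclideanSpace ℝ (Fin d) → EuclideanSpace ℝ (Fin d) := fun a => u a + κ • a with hv
  set D : ℝ := 1 + M + κ with hD
  have hDpos : 0 < D := by simp only [hD]; linarith
  set γ : ℝ := 4 * κ / D ^ 2 with hγ
  have hγpos : 0 < γ := div_pos (by linarith) (by positivity)
  have hγle : γ ≤ 1 := by
    rw [hγ, div_le_one (by positivity), hD]
    nlinarith [sq_nonneg (1 - κ), sq_nonneg M, mul_nonneg hM0 hκ.le]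
  set c : ℝ := Real.sqrt (1 - γ) with hc
  have hc0 : 0 ≤ c := Real.sqrt_nonneg _
  have hc2 : c ^ 2 = 1 - γ := Real.sq_sqrt (by linarith)
  have hclt : c < 1 := by nlinarith
  -- basic inner product estimates on A
  have hinner : ∀ a ∈ A, ∀ b ∈ A, ⟪v a - v b, a - b⟫_ℝ ≥ κ * ‖a - b‖ ^ 2 := by
    intro a ha b hb
    have hveq : v a - v b = (u a - u b) + κ • (a - b) := by
      simp only [hv, smul_sub]; abel
    rw [hveq, inner_add_left, real_inner_smul_left, real_inner_self_eq_norm_sq]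
    have := hmono a ha b hb
    nlinarith
  have hvlip : ∀ a ∈ A, ∀ b ∈ A, ‖v a - v b‖ ≤ (M + κ) * ‖a - b‖ := by
    intro a ha b hb
    have hveq : v a - v b = (u a - u b) + κ • (a - b) := by
      simp only [hv, smul_sub]; abel
    calc ‖v a - v b‖ ≤ ‖u a - u b‖ + ‖κ • (a - b)‖ := by rw [hveq]; exact norm_add_le _ _
      _ ≤ M * ‖a - b‖ + κ * ‖a - b‖ := by
          rw [norm_smul, Real.norm_eq_abs, abs_of_pos hκ]
          exact add_le_add_left (hMlip a ha b hb) _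
      _ = (M + κ) * ‖a - b‖ := by ring
  -- the pairwise Kirszbraun estimate
  have hpair : ∀ a ∈ A, ∀ b ∈ A,
      ‖(a - v a) - (b - v b)‖ ≤ c * ‖(a + v a) - (b + v b)‖ := by
    intro a ha b hb
    set s : EuclideanSpace ℝ (Fin d) := a - b with hs
    set t : EuclideanSpace ℝ (Fin d) := v a - v b with ht
    have h1 : (a - v a) - (b - v b) = s - t := by simp only [hs, ht]; abel
    have h2 : (a + v a) - (b + v b) = s + t := by simp only [hs, ht]; abel
    rw [h1, h2]
    have hst : ⟪t, s⟫_ℝ ≥ κ * ‖s‖ ^ 2 := hinner a ha b hb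
    have hts : ‖t‖ ≤ (M + κ) * ‖s‖ := hvlip a ha b hb
    have hsub : ‖s - t‖ ^ 2 = ‖s‖ ^ 2 - 2 * ⟪s, t⟫_ℝ + ‖t‖ ^ 2 := norm_sub_sq_real s t
    have hadd : ‖s + t‖ ^ 2 = ‖s‖ ^ 2 + 2 * ⟪s, t⟫_ℝ + ‖t‖ ^ 2 := norm_add_sq_real s t
    have hcomm : ⟪s, t⟫_ℝ = ⟪t, s⟫_ℝ := real_inner_comm t s
    have hDs : ‖s + t‖ ≤ D * ‖s‖ := by
      calc ‖s + t‖ ≤ ‖s‖ + ‖t‖ := norm_add_le _ _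
        _ ≤ ‖s‖ + (M + κ) * ‖s‖ := add_le_add_right hts _
        _ = D * ‖s‖ := by rw [hD]; ring
    have hDs2 : ‖s + t‖ ^ 2 ≤ D ^ 2 * ‖s‖ ^ 2 := by
      calc ‖s + t‖ ^ 2 ≤ (D * ‖s‖) ^ 2 :=
            pow_le_pow_left₀ (norm_nonneg _) hDs 2
        _ = D ^ 2 * ‖s‖ ^ 2 := by ring
    have hγD : γ * D ^ 2 = 4 * κ := by
      rw [hγ]; field_simp
    have hsq : ‖s - t‖ ^ 2 ≤ (c * ‖s + t‖) ^ 2 := by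
      have hγst : γ * ‖s + t‖ ^ 2 ≤ 4 * κ * ‖s‖ ^ 2 := by
        calc γ * ‖s + t‖ ^ 2 ≤ γ * (D ^ 2 * ‖s‖ ^ 2) :=
              mul_le_mul_of_nonneg_left hDs2 hγpos.le
          _ = (γ * D ^ 2) * ‖s‖ ^ 2 := by ring
          _ = 4 * κ * ‖s‖ ^ 2 := by rw [hγD]
      have hexp : (c * ‖s + t‖) ^ 2 = (1 - γ) * ‖s + t‖ ^ 2 := by
        rw [mul_pow, hc2]
      rw [hexp]
      nlinarith
    exact (pow_le_pow_iff_left₀ (norm_nonneg _)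
      (mul_nonneg hc0 (norm_nonneg _)) two_ne_zero).1 hsq
  -- injectivity of a ↦ a + v a on A
  have hinj : ∀ a ∈ A, ∀ b ∈ A, a + v a = b + v b → a = b := by
    intro a ha b hb heq
    have hst : ⟪v a - v b, a - b⟫_ℝ ≥ κ * ‖a - b‖ ^ 2 := hinner a ha b hb
    have h0 : (a - b) + (v a - v b) = 0 := by
      rw [← sub_eq_zero] at heq
      rw [← heq]; abel
    have hvv : v a - v b = -(a - b) := by
      rw [← sub_eq_zero]; rw [sub_neg_eq_add, add_comm]; exact h0
    rw [hvv, inner_neg_left, real_inner_self_eq_norm_sq] at hst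
    have hsq0 : ‖a - b‖ ^ 2 ≤ 0 := by nlinarith
    have hn0 : ‖a - b‖ = 0 :=
      le_antisymm (by nlinarith [norm_nonneg (a - b)]) (norm_nonneg _)
    have : a - b = 0 := norm_eq_zero.1 hn0
    rwa [sub_eq_zero] at this
  -- the Cayley transform data on the image finset
  set B : Finset (EuclideanSpace ℝ (Fin d)) := A.image (fun a => a + v a) with hB
  set f : EuclideanSpace ℝ (Fin d) → EuclideanSpace ℝ (Fin d) := fun w =>
    if h : ∃ a ∈ A, a + v a = w then h.choose - v h.choose else 0 with hf
  have hfB : ∀ a ∈ A, f (a + v a) = a - v a := by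
    intro a ha
    have hex : ∃ a' ∈ A, a' + v a' = a + v a := ⟨a, ha, rfl⟩
    rw [hf]
    simp only [dif_pos hex]
    obtain ⟨ha', heq⟩ := hex.choose_spec
    have := hinj _ ha' _ ha heq
    rw [this]
  have hfpair : ∀ x ∈ B, ∀ y ∈ B, ‖f x - f y‖ ≤ c * ‖x - y‖ := by
    intro x hx y hy
    obtain ⟨a, ha, rfl⟩ := Finset.mem_image.1 hx
    obtain ⟨b, hb, rfl⟩ := Finset.mem_image.1 hy
    rw [hfB a ha, hfB b hb]
    exact hpair a ha b hb
  -- extend to a global c-Lipschitz map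
  obtain ⟨g, hgB, hglip⟩ := kirszbraun_extension c hc0 B f hfpair
  have hgA : ∀ a ∈ A, g (a + v a) = a - v a := by
    intro a ha
    rw [hgB _ (Finset.mem_image_of_mem _ ha)]
    exact hfB a ha
  -- the resolvent via Banach fixed point
  have hglipW : LipschitzWith (Real.toNNReal c) g :=
    LipschitzWith.of_dist_le_mul (fun x y => by
      rw [dist_eq_norm, dist_eq_norm, Real.coe_toNNReal c hc0]
      exact hglip x y)
  have hcontr : ∀ z : EuclideanSpace ℝ (Fin d), ContractingWith (Real.toNNReal c) (fun w => z - g w) := by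
    intro z
    refine ⟨Real.toNNReal_lt_one.2 hclt, ?_⟩
    refine LipschitzWith.of_dist_le_mul (fun x y => ?_)
    rw [dist_eq_norm, dist_eq_norm, Real.coe_toNNReal c hc0]
    have : z - g x - (z - g y) = -(g x - g y) := by abel
    rw [this, norm_neg]
    exact hglip x y
  set R : EuclideanSpace ℝ (Fin d) → EuclideanSpace ℝ (Fin d) := fun z => ContractingWith.fixedPoint _ (hcontr z) with hR
  have hfix : ∀ z : EuclideanSpace ℝ (Fin d), z - g (R z) = R z := fun z =>
    ContractingWith.fixedPoint_isFixedPt (hcontr z)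
  have hRA : ∀ a ∈ A, R ((2:ℝ) • a) = a + v a := by
    intro a ha
    refine (ContractingWith.fixedPoint_unique (hcontr ((2:ℝ) • a)) ?_).symm
    show (2:ℝ) • a - g (a + v a) = a + v a
    rw [hgA a ha, two_smul]
    abel
  have hRlip : ∀ z z' : EuclideanSpace ℝ (Fin d), (1 - c) * ‖R z - R z'‖ ≤ ‖z - z'‖ := by
    intro z z'
    have h1 : R z - R z' = (z - z') - (g (R z) - g (R z')) := by
      conv_lhs => rw [← hfix z, ← hfix z']
      abel
    have h2 : ‖R z - R z'‖ ≤ ‖z - z'‖ + c * ‖R z - R z'‖ := by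
      calc ‖R z - R z'‖ = ‖(z - z') - (g (R z) - g (R z'))‖ := by rw [← h1]
        _ ≤ ‖z - z'‖ + ‖g (R z) - g (R z')‖ := norm_sub_le _ _
        _ ≤ ‖z - z'‖ + c * ‖R z - R z'‖ := add_le_add_right (hglip _ _) _
    linarith
  -- the final map
  set L : ℝ := 2 / (1 - c) + 1 + κ with hL
  have hL0 : 0 ≤ L := by
    have : 0 < 1 - c := by linarith
    have : 0 ≤ 2 / (1 - c) := by positivity
    simp only [hL]; linarith
  set ut : EuclideanSpace ℝ (Fin d) → EuclideanSpace ℝ (Fin d) := fun x => R ((2:ℝ) • x) - (1 + κ) • x with hut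
  refine ⟨L, hL0, ut, ?_, ?_, ?_⟩
  · -- Lipschitz
    refine LipschitzWith.of_dist_le_mul (fun x y => ?_)
    rw [dist_eq_norm, dist_eq_norm, Real.coe_toNNReal L hL0]
    have h1 : ut x - ut y = (R ((2:ℝ) • x) - R ((2:ℝ) • y)) - (1 + κ) • (x - y) := by
      simp only [hut, smul_sub]; abel
    have h2 : (1 - c) * ‖R ((2:ℝ) • x) - R ((2:ℝ) • y)‖ ≤ ‖(2:ℝ) • x - (2:ℝ) • y‖ :=
      hRlip _ _
    have h3 : ‖(2:ℝ) • x - (2:ℝ) • y‖ = 2 * ‖x - y‖ := by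
      rw [← smul_sub, norm_smul, Real.norm_eq_abs]
      norm_num
    have hcpos : 0 < 1 - c := by linarith
    have h4 : ‖R ((2:ℝ) • x) - R ((2:ℝ) • y)‖ ≤ 2 / (1 - c) * ‖x - y‖ := by
      rw [div_mul_eq_mul_div, le_div_iff₀ hcpos]
      calc ‖R ((2:ℝ) • x) - R ((2:ℝ) • y)‖ * (1 - c)
          = (1 - c) * ‖R ((2:ℝ) • x) - R ((2:ℝ) • y)‖ := by ring
        _ ≤ ‖(2:ℝ) • x - (2:ℝ) • y‖ := h2
        _ = 2 * ‖x - y‖ := h3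
    calc ‖ut x - ut y‖
        ≤ ‖R ((2:ℝ) • x) - R ((2:ℝ) • y)‖ + ‖(1 + κ) • (x - y)‖ := by
          rw [h1]; exact norm_sub_le _ _
      _ ≤ 2 / (1 - c) * ‖x - y‖ + (1 + κ) * ‖x - y‖ := by
          refine add_le_add h4 ?_
          rw [norm_smul, Real.norm_eq_abs, abs_of_pos (by linarith)]
      _ = L * ‖x - y‖ := by rw [hL]; ring
  · -- agreement on A
    intro a ha
    simp only [hut]
    rw [hRA a ha, hv]
    show a + (u a + κ • a) - (1 + κ) • a = u a
    rw [add_smul, one_smul]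
    abel
  · -- almost monotonicity
    intro x y
    set w := R ((2:ℝ) • x) with hw
    set w' := R ((2:ℝ) • y) with hw'
    set dw : EuclideanSpace ℝ (Fin d) := w - w' with hdw
    set dg : EuclideanSpace ℝ (Fin d) := g w - g w' with hdg
    have h2xy : (2:ℝ) • (x - y) = dw + dg := by
      have hx' : (2:ℝ) • x = w + g w := by
        have h := hfix ((2:ℝ) • x)
        rw [← hw] at h
        exact (sub_eq_iff_eq_add.1 h)
      have hy' : (2:ℝ) • y = w' + g w' := by
        have h := hfix ((2:ℝ) • y)
        rw [← hw'] at h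
        exact (sub_eq_iff_eq_add.1 h)
      rw [smul_sub, hx', hy', hdw, hdg]; abel
    have hgle : ‖dg‖ ≤ c * ‖dw‖ := hglip w w'
    have hgsq : ‖dg‖ ^ 2 ≤ ‖dw‖ ^ 2 := by
      calc ‖dg‖ ^ 2 ≤ (c * ‖dw‖) ^ 2 := pow_le_pow_left₀ (norm_nonneg _) hgle 2
        _ ≤ 1 * ‖dw‖ ^ 2 := by nlinarith [norm_nonneg dw]
        _ = ‖dw‖ ^ 2 := one_mul _
    have h2P : 2 * ⟪dw, x - y⟫_ℝ = ‖dw‖ ^ 2 + ⟪dw, dg⟫_ℝ := by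
      calc 2 * ⟪dw, x - y⟫_ℝ = ⟪dw, (2:ℝ) • (x - y)⟫_ℝ := by
            rw [real_inner_smul_right]
        _ = ⟪dw, dw + dg⟫_ℝ := by rw [h2xy]
        _ = ‖dw‖ ^ 2 + ⟪dw, dg⟫_ℝ := by
            rw [inner_add_right, real_inner_self_eq_norm_sq]
    have h4n : 4 * ‖x - y‖ ^ 2 = ‖dw‖ ^ 2 + 2 * ⟪dw, dg⟫_ℝ + ‖dg‖ ^ 2 := by
      have e1 : ‖(2:ℝ) • (x - y)‖ ^ 2 = 4 * ‖x - y‖ ^ 2 := by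
        rw [norm_smul, Real.norm_eq_abs]
        rw [mul_pow]
        norm_num
      have e2 : ‖(2:ℝ) • (x - y)‖ ^ 2 = ‖dw + dg‖ ^ 2 := by rw [h2xy]
      rw [← e1, e2, norm_add_sq_real]
    have hutd : ut x - ut y = dw - (1 + κ) • (x - y) := by
      simp only [hut, hdw, hw, hw', smul_sub]; abel
    rw [hutd, inner_sub_left, real_inner_smul_left, real_inner_self_eq_norm_sq]
    have hP : ⟪dw, x - y⟫_ℝ ≥ ‖x - y‖ ^ 2 := by nlinarith
    nlinarith
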